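/- Let α(x) = (a + r cos(x/r), r sin(x/r)) with r > 0, a > 0, let g : ℝ → ℝ be C³, convex, even, with g' ≥ 0, and define H₁(x) = g'(|α(x)|)·(N(x)·n(x)) with N(x) = α(x)/|α(x)| and n(x) = (cos(x/r), sin(x/r)). If g'(a + r) > 0, then H₁''(0) < 0. -/

import Mathlib

open Set Real

noncomputable def rhoD (a r : ℝ) : ℝ → ℝ := fun t => Real.sqrt (a^2 + r^2 + 2*a*r*Real.cos (t/r))

noncomputable def DD (g : ℝ → ℝ) (a r : ℝ) : ℝ → ℝ := fun t =>
  deriv (deriv g) (rhoD a r t) * (2*a*r*(-Real.sin (t/r) * (1/r)) / (2 * rhoD a r t))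
      * ((a * Real.cos (t/r) + r) / rhoD a r t)
  + deriv g (rhoD a r t) *
      ((a * (-Real.sin (t/r) * (1/r)) * rhoD a r t
         - (a * Real.cos (t/r) + r) * (2*a*r*(-Real.sin (t/r) * (1/r)) / (2 * rhoD a r t)))
        / rhoD a r t ^ 2)

lemma monotone_deriv_nonneg' {f : ℝ → ℝ} (hm : Monotone f) {x : ℝ}
    (hd : DifferentiableAt ℝ f x) : 0 ≤ deriv f x := by
  have h := hd.hasDerivAt
  rw [hasDerivAt_iff_tendsto_slope] at h
  have h2 : Filter.Tendsto (slope f x) (nhdsWithin x (Set.Ioi x)) (nhds (deriv f x)) :=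
    h.mono_left (nhdsWithin_mono x fun y hy => ne_of_gt hy)
  refine ge_of_tendsto h2 ?_
  filter_upwards [self_mem_nhdsWithin] with y hy
  have hxy : x < y := hy
  rw [slope_def_field]
  exact div_nonneg (sub_nonneg.2 (hm hxy.le)) (sub_nonneg.2 hxy.le)

/-- `H₁''(0) < 0` along the circle `α(x) = (a + r cos(x/r), r sin(x/r))` centered at
    `(a, 0)` with `a > 0`, when `g'(a + r) > 0`. -/
theorem H1_second_deriv_neg_at_zero
    (a r : ℝ) (hr : 0 < r) (ha : 0 < a)
    (g : ℝ → ℝ) (hg : ContDiff ℝ 3 g) (hgconv : ConvexOn ℝ univ g)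
    (hgeven : ∀ t, g (-t) = g t)
    (hg' : ∀ t, 0 ≤ t → 0 ≤ deriv g t)
    (H₁ : ℝ → ℝ)
    (hH₁ : H₁ = fun t =>
      deriv g (Real.sqrt ((a + r * Real.cos (t / r)) ^ 2 + (r * Real.sin (t / r)) ^ 2))
        * (((a + r * Real.cos (t / r)) * Real.cos (t / r)
            + (r * Real.sin (t / r)) * Real.sin (t / r))
          / Real.sqrt ((a + r * Real.cos (t / r)) ^ 2 + (r * Real.sin (t / r)) ^ 2)))
    (hgar : 0 < deriv g (a + r)) :
    deriv (deriv H₁) 0 < 0 := by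
  have hrne : r ≠ 0 := hr.ne'
  have hb : 0 < a + r := by linarith
  -- smoothness bookkeeping
  have hg2 : ContDiff ℝ 2 (deriv g) := by
    have : ContDiff ℝ ((2 : ℕ) + 1) g := by exact_mod_cast hg
    exact (contDiff_succ_iff_deriv.mp this).2.2
  have hfd : Differentiable ℝ (deriv g) := hg2.differentiable (by norm_num)
  have hf'd : Differentiable ℝ (deriv (deriv g)) := by
    have : ContDiff ℝ ((1 : ℕ) + 1) (deriv g) := by exact_mod_cast hg2
    exact ((contDiff_succ_iff_deriv.mp this).2.2).differentiable (by norm_num)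
  -- second derivative of g is nonneg at a + r (convexity)
  have hmono : Monotone (deriv g) := by
    have := hgconv.monotoneOn_deriv (fun x _ => (hg.differentiable (by norm_num)).differentiableAt)
    exact monotoneOn_univ.mp this
  have hgd2 : 0 ≤ deriv (deriv g) (a + r) := monotone_deriv_nonneg' hmono (hfd _)
  -- rewrite H₁ in terms of rhoD
  have hform : H₁ = fun t => deriv g (rhoD a r t) * ((a * Real.cos (t/r) + r) / rhoD a r t) := by
    rw [hH₁]
    funext t
    have hpy : Real.sin (t/r) ^ 2 + Real.cos (t/r) ^ 2 = 1 := Real.sin_sq_add_cos_sq _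
    have h1 : (a + r * Real.cos (t / r)) ^ 2 + (r * Real.sin (t / r)) ^ 2
        = a^2 + r^2 + 2*a*r*Real.cos (t/r) := by nlinarith [hpy]
    have h2 : (a + r * Real.cos (t / r)) * Real.cos (t / r)
        + (r * Real.sin (t / r)) * Real.sin (t / r) = a * Real.cos (t/r) + r := by nlinarith [hpy]
    rw [h1, h2, rhoD]
  -- H₁ has derivative DD g a r on the set where cos (t/r) > 0
  have key : ∀ t : ℝ, 0 < Real.cos (t/r) → HasDerivAt H₁ (DD g a r t) t := by
    intro t hct
    rw [hform]
    have hqpos : 0 < a^2 + r^2 + 2*a*r*Real.cos (t/r) := by positivity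
    have hρpos : 0 < rhoD a r t := Real.sqrt_pos.mpr hqpos
    have hcos : HasDerivAt (fun x : ℝ => Real.cos (x/r)) (-Real.sin (t/r) * (1/r)) t :=
      ((hasDerivAt_id' t).div_const r).cos
    have hq : HasDerivAt (fun t => a^2 + r^2 + 2*a*r*Real.cos (t/r))
        (2*a*r*(-Real.sin (t/r) * (1/r))) t := (hcos.const_mul (2*a*r)).const_add (a^2+r^2)
    have hρ : HasDerivAt (rhoD a r) (2*a*r*(-Real.sin (t/r) * (1/r)) / (2 * rhoD a r t)) t :=
      hq.sqrt hqpos.ne'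
    have hnum : HasDerivAt (fun t => a * Real.cos (t/r) + r) (a * (-Real.sin (t/r) * (1/r))) t :=
      (hcos.const_mul a).add_const r
    have hφ := hnum.div hρ hρpos.ne'
    have hcomp : HasDerivAt (fun t => deriv g (rhoD a r t))
        (deriv (deriv g) (rhoD a r t) * (2*a*r*(-Real.sin (t/r) * (1/r)) / (2 * rhoD a r t))) t :=
      ((hfd (rhoD a r t)).hasDerivAt).comp t hρ
    exact hcomp.mul hφ
  -- deriv H₁ agrees with DD near 0
  have hU : IsOpen {t : ℝ | 0 < Real.cos (t/r)} :=
    isOpen_lt continuous_const (Real.continuous_cos.comp (continuous_id.div_const r))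
  have h0U : (0 : ℝ) ∈ {t : ℝ | 0 < Real.cos (t/r)} := by
    simp [Set.mem_setOf_eq]
  have hev : deriv H₁ =ᶠ[nhds 0] DD g a r :=
    Filter.eventuallyEq_of_mem (hU.mem_nhds h0U) (fun t ht => (key t ht).deriv)
  rw [hev.deriv_eq]
  -- now compute the derivative of DD at 0
  set t : ℝ := 0 with ht
  have hct : 0 < Real.cos (t/r) := by simp [ht]
  have hqpos : 0 < a^2 + r^2 + 2*a*r*Real.cos (t/r) := by positivity
  have hρpos : 0 < rhoD a r t := Real.sqrt_pos.mpr hqpos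
  have hρ0 : rhoD a r t = a + r := by
    have h1 : a^2 + r^2 + 2*a*r*Real.cos (t/r) = (a+r)^2 := by
      simp [ht]; ring
    rw [rhoD, h1, Real.sqrt_sq hb.le]
  have hcos : HasDerivAt (fun x : ℝ => Real.cos (x/r)) (-Real.sin (t/r) * (1/r)) t :=
    ((hasDerivAt_id' t).div_const r).cos
  have hsin : HasDerivAt (fun x : ℝ => Real.sin (x/r)) (Real.cos (t/r) * (1/r)) t :=
    ((hasDerivAt_id' t).div_const r).sin
  have hq : HasDerivAt (fun t => a^2 + r^2 + 2*a*r*Real.cos (t/r))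
      (2*a*r*(-Real.sin (t/r) * (1/r))) t := (hcos.const_mul (2*a*r)).const_add (a^2+r^2)
  have hρ : HasDerivAt (rhoD a r) (2*a*r*(-Real.sin (t/r) * (1/r)) / (2 * rhoD a r t)) t :=
    hq.sqrt hqpos.ne'
  have hnum : HasDerivAt (fun t => a * Real.cos (t/r) + r) (a * (-Real.sin (t/r) * (1/r))) t :=
    (hcos.const_mul a).add_const r
  have hφ := hnum.div hρ hρpos.ne'
  have hN1 : HasDerivAt (fun t => 2*a*r*(-Real.sin (t/r) * (1/r)))
      (2*a*r*(-(Real.cos (t/r) * (1/r)) * (1/r))) t :=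
    ((hsin.neg).mul_const (1/r)).const_mul (2*a*r)
  have hden : HasDerivAt (fun t => 2 * rhoD a r t)
      (2 * (2*a*r*(-Real.sin (t/r) * (1/r)) / (2 * rhoD a r t))) t := hρ.const_mul 2
  have hρd := hN1.div hden (by positivity)
  have h1 : HasDerivAt (fun t => deriv (deriv g) (rhoD a r t))
      (deriv (deriv (deriv g)) (rhoD a r t) * (2*a*r*(-Real.sin (t/r) * (1/r)) / (2 * rhoD a r t))) t :=
    ((hf'd (rhoD a r t)).hasDerivAt).comp t hρ
  have hcomp : HasDerivAt (fun t => deriv g (rhoD a r t))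
      (deriv (deriv g) (rhoD a r t) * (2*a*r*(-Real.sin (t/r) * (1/r)) / (2 * rhoD a r t))) t :=
    ((hfd (rhoD a r t)).hasDerivAt).comp t hρ
  have hn1 : HasDerivAt (fun t => a * (-Real.sin (t/r) * (1/r)) * rhoD a r t)
      ((a * (-(Real.cos (t/r) * (1/r)) * (1/r))) * rhoD a r t
       + (a * (-Real.sin (t/r) * (1/r))) * (2*a*r*(-Real.sin (t/r) * (1/r)) / (2 * rhoD a r t))) t :=
    (((hsin.neg).mul_const (1/r)).const_mul a).mul hρ
  have hn2 := hnum.mul hρd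
  have hnsub := hn1.sub hn2
  have hρsq : HasDerivAt (fun t => rhoD a r t ^ 2)
      (2 * rhoD a r t ^ 1 * (2*a*r*(-Real.sin (t/r) * (1/r)) / (2 * rhoD a r t))) t := hρ.pow 2
  have hφd := hnsub.div hρsq (by positivity)
  have hA := (h1.mul hρd).mul hφ
  have hB := hcomp.mul hφd
  have hD := hA.add hB
  have hval := hD.deriv
  simp only [Pi.mul_def, Pi.div_def, Pi.add_def, Pi.sub_def] at hval
  rw [show (fun t => _ + _) = DD g a r from rfl] at hval
  rw [hval, hρ0]
  simp only [ht, zero_div, Real.sin_zero, Real.cos_zero, neg_zero, zero_mul, mul_zero,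
    mul_one, one_mul, zero_add, add_zero, sub_zero, zero_sub, pow_one]
  have heq : deriv (deriv g) (a + r) * (2 * a * r * (-(1 / r) * (1 / r)) * (2 * (a + r)) / (2 * (a + r)) ^ 2) *
        ((a + r) / (a + r)) +
      deriv g (a + r) *
        ((a * (-(1 / r) * (1 / r)) * (a + r) -
              (a + r) * (2 * a * r * (-(1 / r) * (1 / r)) * (2 * (a + r)) / (2 * (a + r)) ^ 2)) *
            (a + r) ^ 2 /
          ((a + r) ^ 2) ^ 2)
      = -(deriv (deriv g) (a+r) * (a/(r*(a+r))) + deriv g (a+r) * (a^2/(r^2*(a+r)^2))) := by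
    field_simp
    ring
  rw [heq, neg_lt_zero]
  exact add_pos_of_nonneg_of_pos (mul_nonneg hgd2 (by positivity)) (mul_pos hgar (by positivity))
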